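/- For every finite simple graph G, the Euler characteristic of the Barycentric refinement of G equals the Euler characteristic of G: χ(G₁) = χ(G). -/

import Mathlib

open Finset
open scoped Classical

/-- The cliques of the graph `G` contained in the vertex set `A`. -/
noncomputable def cliquesOn {V : Type*} (G : SimpleGraph V) (A : Finset V) :
    Finset (Finset V) :=
  A.powerset.filter (fun s => s.Nonempty ∧ G.IsClique (s : Set V))

/-- Euler characteristic of the subgraph of `G` induced on `A`. -/
noncomputable def eulerCharOn {V : Type*} (G : SimpleGraph V) (A : Finset V) : ℤ :=
  ∑ s ∈ cliquesOn G A, (-1) ^ (s.card - 1)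

/-- Euler characteristic of a finite simple graph. -/
noncomputable def eulerChar {V : Type*} [Fintype V] (G : SimpleGraph V) : ℤ :=
  eulerCharOn G Finset.univ

/-- The Barycentric refinement of `G`: vertices are the cliques of `G`, and two
cliques are adjacent iff one is a proper subset of the other. -/
def barycentric {V : Type*} (G : SimpleGraph V) :
    SimpleGraph {s : Finset V // s.Nonempty ∧ G.IsClique (s : Set V)} where
  Adj x y := x.1 ⊂ y.1 ∨ y.1 ⊂ x.1
  symm := by
    constructor
    intro x y h
    exact h.symm
  loopless := by
    constructor
    intro x h
    rcases h with h | h <;> exact ssubset_irrefl _ h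

set_option maxHeartbeats 1000000

section Chains

variable {V : Type*}

/-- Chains (nonempty-or-empty finsets of pairwise ⊆-comparable sets) inside `S`. -/
noncomputable def chainsIn (S : Finset (Finset V)) : Finset (Finset (Finset V)) :=
  S.powerset.filter (fun C => ∀ a ∈ C, ∀ b ∈ C, a ⊆ b ∨ b ⊆ a)

lemma mem_chainsIn {S C : Finset (Finset V)} :
    C ∈ chainsIn S ↔ C ⊆ S ∧ ∀ a ∈ C, ∀ b ∈ C, a ⊆ b ∨ b ⊆ a := by
  simp [chainsIn]

lemma chain_sup_mem {C : Finset (Finset V)} (hne : C.Nonempty)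
    (hch : ∀ a ∈ C, ∀ b ∈ C, a ⊆ b ∨ b ⊆ a) :
    C.sup id ∈ C ∧ ∀ a ∈ C, a ⊆ C.sup id := by
  obtain ⟨m, hm, hmax⟩ := C.exists_max_image (fun t => t.card) hne
  have hsub : ∀ a ∈ C, a ⊆ m := by
    intro a ha
    rcases hch a ha m hm with h | h
    · exact h
    · exact le_of_eq (Finset.eq_of_subset_of_card_le h (hmax a ha)).symm
  have hs : C.sup id = m :=
    le_antisymm (Finset.sup_le fun a ha => hsub a ha) (Finset.le_sup (f := id) hm)
  rw [hs]; exact ⟨hm, hsub⟩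

/-- Key recursion: partition nonempty chains by their maximal element. -/
lemma chainsIn_sum_rec (S : Finset (Finset V)) :
    ∑ C ∈ chainsIn S, (-1 : ℤ) ^ C.card
      = 1 - ∑ s ∈ S, ∑ C ∈ chainsIn (S.filter (· ⊂ s)), (-1 : ℤ) ^ C.card := by
  have h0 : (∅ : Finset (Finset V)) ∈ chainsIn S := by simp [mem_chainsIn]
  rw [← Finset.add_sum_erase _ _ h0]
  have key : ∑ C ∈ (chainsIn S).erase ∅, (-1 : ℤ) ^ C.card
      = ∑ x ∈ S.sigma (fun s => chainsIn (S.filter (· ⊂ s))), -((-1 : ℤ) ^ x.2.card) := by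
    apply Finset.sum_bij' (i := fun C _ => (⟨C.sup id, C.erase (C.sup id)⟩ :
        Σ _ : Finset V, Finset (Finset V)))
      (j := fun x _ => insert x.1 x.2)
    · -- hi
      intro C hC
      rw [Finset.mem_erase] at hC
      obtain ⟨hCne, hCch⟩ := hC
      rw [mem_chainsIn] at hCch
      obtain ⟨hCS, hch⟩ := hCch
      obtain ⟨hsupmem, hsup⟩ := chain_sup_mem (Finset.nonempty_of_ne_empty hCne) hch
      rw [Finset.mem_sigma]
      constructor
      · exact hCS hsupmem
      · rw [mem_chainsIn]
        constructor
        · intro a ha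
          rw [Finset.mem_erase] at ha
          rw [Finset.mem_filter]
          exact ⟨hCS ha.2, ssubset_of_subset_of_ne (hsup a ha.2) ha.1⟩
        · intro a ha b hb
          exact hch a (Finset.mem_of_mem_erase ha) b (Finset.mem_of_mem_erase hb)
    · -- hj
      intro x hx
      rw [Finset.mem_sigma] at hx
      obtain ⟨hxS, hxc⟩ := hx
      rw [mem_chainsIn] at hxc
      obtain ⟨hsub, hch⟩ := hxc
      have hlt : ∀ a ∈ x.2, a ⊂ x.1 := fun a ha => (Finset.mem_filter.mp (hsub ha)).2
      rw [Finset.mem_erase, mem_chainsIn]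
      refine ⟨?_, ?_, ?_⟩
      · exact Finset.insert_ne_empty _ _
      · intro a ha
        rcases Finset.mem_insert.mp ha with h | h
        · exact h ▸ hxS
        · exact (Finset.mem_filter.mp (hsub h)).1
      · intro a ha b hb
        rcases Finset.mem_insert.mp ha with h1 | h1 <;>
          rcases Finset.mem_insert.mp hb with h2 | h2
        · subst h1; subst h2; exact Or.inl subset_rfl
        · exact Or.inr (h1 ▸ (hlt b h2).subset)
        · exact Or.inl (h2 ▸ (hlt a h1).subset)
        · exact hch a h1 b h2
    · -- left inv
      intro C hC
      rw [Finset.mem_erase] at hC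
      rw [mem_chainsIn] at hC
      obtain ⟨hsupmem, _⟩ := chain_sup_mem (Finset.nonempty_of_ne_empty hC.1) hC.2.2
      exact Finset.insert_erase hsupmem
    · -- right inv
      intro x hx
      rw [Finset.mem_sigma] at hx
      obtain ⟨hxS, hxc⟩ := hx
      rw [mem_chainsIn] at hxc
      have hlt : ∀ a ∈ x.2, a ⊂ x.1 := fun a ha => (Finset.mem_filter.mp (hxc.1 ha)).2
      have hnm : x.1 ∉ x.2 := fun h => (hlt _ h).ne rfl
      have hsup : (insert x.1 x.2).sup id = x.1 := by
        rw [Finset.sup_insert]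
        exact sup_eq_left.mpr (Finset.sup_le fun a ha => (hlt a ha).subset)
      have : (insert x.1 x.2).erase ((insert x.1 x.2).sup id) = x.2 := by
        rw [hsup, Finset.erase_insert hnm]
      exact Sigma.ext hsup (heq_of_eq this)
    · -- values
      intro C hC
      rw [Finset.mem_erase] at hC
      rw [mem_chainsIn] at hC
      obtain ⟨hsupmem, _⟩ := chain_sup_mem (Finset.nonempty_of_ne_empty hC.1) hC.2.2
      have : C.card = (C.erase (C.sup id)).card + 1 := by
        rw [Finset.card_erase_of_mem hsupmem]
        exact (Nat.succ_pred_eq_of_pos (Finset.card_pos.mpr ⟨_, hsupmem⟩)).symm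
      rw [this, pow_succ]
      ring
  rw [key, Finset.sum_sigma]
  simp only [Finset.sum_neg_distrib, Finset.card_empty, pow_zero]
  ring

/-- The nonempty proper subsets of `s`. -/
noncomputable def PNE (s : Finset V) : Finset (Finset V) :=
  s.powerset.filter (fun t => t.Nonempty ∧ t ≠ s)

lemma PNE_filter {s t : Finset V} (ht : t ∈ PNE s) :
    (PNE s).filter (· ⊂ t) = PNE t := by
  rw [PNE, Finset.mem_filter, Finset.mem_powerset] at ht
  have hts := ht.1
  have htns := ht.2.2
  ext u
  simp only [PNE, Finset.mem_filter, Finset.mem_powerset]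
  constructor
  · rintro ⟨⟨hus, hune, huns⟩, hut⟩
    exact ⟨hut.subset, hune, hut.ne⟩
  · rintro ⟨hut, hune, hunt⟩
    have hult : u ⊂ t := ssubset_of_subset_of_ne hut hunt
    refine ⟨⟨hult.subset.trans hts, hune, ?_⟩, hult⟩
    rintro rfl
    exact (hult.trans_subset hts).ne rfl

lemma PNE_sum : ∀ (s : Finset V), s.Nonempty →
    ∑ C ∈ chainsIn (PNE s), (-1 : ℤ) ^ C.card = (-1) ^ (s.card - 1) := by
  intro s
  induction s using Finset.strongInduction with
  | _ s ih =>
    intro hs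
    rw [show chainsIn (PNE s) = chainsIn ((PNE s : Finset (Finset V))) from rfl]
    rw [chainsIn_sum_rec]
    have hstep : ∀ t ∈ PNE s, ∑ C ∈ chainsIn ((PNE s).filter (· ⊂ t)), (-1:ℤ)^C.card
        = (-1) ^ (t.card - 1) := by
      intro t ht
      rw [PNE_filter ht]
      have h1 := Finset.mem_filter.mp ht
      have h2 := Finset.mem_powerset.mp h1.1
      exact ih t (ssubset_of_subset_of_ne h2 h1.2.2) h1.2.1
    rw [Finset.sum_congr rfl hstep]
    -- now: 1 - ∑ t ∈ PNE s, (-1)^(t.card-1) = (-1)^(s.card-1)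
    have hpoint : ∀ t ∈ PNE s, ((-1 : ℤ)) ^ (t.card - 1) = -((-1) ^ t.card) := by
      intro t ht
      have hne := (Finset.mem_filter.mp ht).2.1
      have : t.card = (t.card - 1) + 1 := (Nat.succ_pred_eq_of_pos (Finset.card_pos.mpr hne)).symm
      rw [this]
      simp [pow_succ]
    rw [Finset.sum_congr rfl hpoint, Finset.sum_neg_distrib]
    have hPNE : PNE s = (s.powerset.erase s).erase ∅ := by
      ext t
      simp only [PNE, Finset.mem_filter, Finset.mem_erase, Finset.mem_powerset,
        Finset.nonempty_iff_ne_empty]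
      tauto
    have hsum : ∑ t ∈ PNE s, ((-1:ℤ)) ^ t.card = -1 - (-1)^s.card := by
      rw [hPNE, Finset.sum_erase_eq_sub, Finset.sum_erase_eq_sub (Finset.mem_powerset_self s),
        Finset.sum_powerset_neg_one_pow_card]
      · simp only [Finset.nonempty_iff_ne_empty.mp hs, if_false, Finset.card_empty, pow_zero]
        ring
      · rw [Finset.mem_erase]
        exact ⟨Ne.symm (Finset.nonempty_iff_ne_empty.mp hs), Finset.empty_mem_powerset s⟩
    rw [hsum]
    have hc : s.card - 1 + 1 = s.card := Nat.succ_pred_eq_of_pos (Finset.card_pos.mpr hs)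
    have h2 : ((-1 : ℤ)) ^ s.card = -((-1)^(s.card - 1)) := by
      conv_lhs => rw [← hc]
      rw [pow_succ]; ring
    rw [h2]
    ring

end Chains

/-- The Euler characteristic of the Barycentric refinement of `G` equals the
Euler characteristic of `G`. -/
theorem eulerChar_barycentric {V : Type*} [Fintype V] (G : SimpleGraph V) :
    eulerChar (barycentric G) = eulerChar G := by
  classical
  set S := cliquesOn G Finset.univ with hS
  have hmemS : ∀ {t : Finset V}, t ∈ S ↔ t.Nonempty ∧ G.IsClique (t : Set V) := by
    intro t
    simp [hS, cliquesOn]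
  have hfs : ∀ s ∈ S, S.filter (· ⊂ s) = PNE s := by
    intro s hsmem
    have hs := hmemS.mp hsmem
    ext u
    simp only [Finset.mem_filter, PNE, Finset.mem_powerset]
    constructor
    · rintro ⟨humem, hus⟩
      exact ⟨hus.subset, (hmemS.mp humem).1, hus.ne⟩
    · rintro ⟨hus, hune, hne⟩
      exact ⟨hmemS.mpr ⟨hune, hs.2.subset (Finset.coe_subset.mpr hus)⟩,
        ssubset_of_subset_of_ne hus hne⟩
  have hFS : ∑ C ∈ chainsIn S, (-1 : ℤ) ^ C.card = 1 - eulerChar G := by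
    rw [chainsIn_sum_rec]
    congr 1
    rw [eulerChar, eulerCharOn]
    apply Finset.sum_congr rfl
    intro s hsmem
    rw [hfs s hsmem]
    exact PNE_sum s (hmemS.mp hsmem).1
  have h0 : (∅ : Finset (Finset V)) ∈ chainsIn S := by simp [mem_chainsIn]
  have hsplit : ∑ C ∈ chainsIn S, (-1 : ℤ) ^ C.card
      = 1 + ∑ C ∈ (chainsIn S).erase ∅, (-1 : ℤ) ^ C.card := by
    rw [← Finset.add_sum_erase _ _ h0]
    simp
  have hpoint : ∀ C ∈ (chainsIn S).erase ∅, ((-1 : ℤ)) ^ C.card = -((-1) ^ (C.card - 1)) := by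
    intro C hC
    have hne : C.Nonempty := Finset.nonempty_of_ne_empty (Finset.mem_erase.mp hC).1
    have hc : C.card - 1 + 1 = C.card := Nat.succ_pred_eq_of_pos (Finset.card_pos.mpr hne)
    conv_lhs => rw [← hc]
    rw [pow_succ]; ring
  have hchain : ∑ C ∈ (chainsIn S).erase ∅, ((-1 : ℤ)) ^ (C.card - 1) = eulerChar G := by
    have h := hFS
    rw [hsplit, Finset.sum_congr rfl hpoint, Finset.sum_neg_distrib] at h
    linarith
  have hmemB : ∀ x : Finset {s : Finset V // s.Nonempty ∧ G.IsClique (s : Set V)},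
      x ∈ cliquesOn (barycentric G) Finset.univ ↔
        x.Nonempty ∧ (barycentric G).IsClique (↑x : Set _) := by
    intro x
    simp [cliquesOn]
  have hbridge : eulerChar (barycentric G)
      = ∑ C ∈ (chainsIn S).erase ∅, ((-1 : ℤ)) ^ (C.card - 1) := by
    rw [eulerChar, eulerCharOn]
    refine Finset.sum_bij' (fun x _ => x.image Subtype.val)
      (fun C hC => C.attach.image
        (fun t => ⟨t.1, hmemS.mp ((mem_chainsIn.mp (Finset.mem_erase.mp hC).2).1 t.2)⟩))
      ?_ ?_ ?_ ?_ ?_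
    · -- hi
      intro x hx
      have hx' := (hmemB x).mp hx
      rw [Finset.mem_erase, mem_chainsIn]
      refine ⟨?_, ?_, ?_⟩
      · exact Finset.nonempty_iff_ne_empty.mp (hx'.1.image _)
      · intro u hu
        obtain ⟨a, ha, rfl⟩ := Finset.mem_image.mp hu
        exact hmemS.mpr a.2
      · intro u hu v hv
        obtain ⟨a, ha, rfl⟩ := Finset.mem_image.mp hu
        obtain ⟨b, hb, rfl⟩ := Finset.mem_image.mp hv
        by_cases hab : a = b
        · subst hab; exact Or.inl subset_rfl
        · have := hx'.2 (Finset.mem_coe.mpr ha) (Finset.mem_coe.mpr hb) hab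
          rcases this with h | h
          · exact Or.inl h.subset
          · exact Or.inr h.subset
    · -- hj
      intro C hC
      have hC' := Finset.mem_erase.mp hC
      have hCS := (mem_chainsIn.mp hC'.2).1
      have hch := (mem_chainsIn.mp hC'.2).2
      have hmemj : ∀ (a : {s : Finset V // s.Nonempty ∧ G.IsClique (s : Set V)}),
          (a ∈ C.attach.image
            (fun t => (⟨t.1, hmemS.mp ((mem_chainsIn.mp (Finset.mem_erase.mp hC).2).1 t.2)⟩ :
              {s : Finset V // s.Nonempty ∧ G.IsClique (s : Set V)}))) ↔ a.1 ∈ C := by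
        intro a
        simp only [Finset.mem_image, Finset.mem_attach, true_and, Subtype.ext_iff]
        constructor
        · rintro ⟨t, ht⟩
          rw [← ht]; exact t.2
        · intro ha
          exact ⟨⟨a.1, ha⟩, rfl⟩
      rw [hmemB]
      refine ⟨?_, ?_⟩
      · obtain ⟨t, ht⟩ := Finset.nonempty_of_ne_empty hC'.1
        exact ⟨⟨t, hmemS.mp (hCS ht)⟩, (hmemj _).mpr ht⟩
      · intro a ha b hb hne
        have ha' := (hmemj a).mp (Finset.mem_coe.mp ha)
        have hb' := (hmemj b).mp (Finset.mem_coe.mp hb)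
        have hvne : a.1 ≠ b.1 := fun h => hne (Subtype.ext h)
        rcases hch a.1 ha' b.1 hb' with h | h
        · exact Or.inl (ssubset_of_subset_of_ne h hvne)
        · exact Or.inr (ssubset_of_subset_of_ne h hvne.symm)
    · -- left inverse
      intro x hx
      ext a
      simp only [Finset.mem_image, Finset.mem_attach, true_and, Subtype.ext_iff]
      constructor
      · rintro ⟨t, ht⟩
        have h2 : (a : Finset V) ∈ x.image Subtype.val := ht ▸ t.2
        obtain ⟨b, hb, hba⟩ := Finset.mem_image.mp h2
        rwa [show b = a from Subtype.ext hba] at hb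
      · intro ha
        refine ⟨⟨a.1, ?_⟩, rfl⟩
        exact Finset.mem_image.mpr ⟨a, ha, rfl⟩
    · -- right inverse
      intro C hC
      ext t
      simp only [Finset.image_image, Finset.mem_image, Function.comp, Finset.mem_attach,
        true_and, Subtype.exists]
      constructor
      · rintro ⟨a, ha, rfl⟩
        exact ha
      · intro ht
        exact ⟨t, ht, rfl⟩
    · -- values
      intro x hx
      rw [Finset.card_image_of_injective _ Subtype.val_injective]
  rw [hbridge, hchain]
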